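/- Let U ⊆ ℝⁿ be open, n ≤ m, f : U → ℝ^m a C^∞ map, and a ∈ U; equip ℝ^m with the standard Euclidean inner product. Then f is a frontal at a if and only if there exist an open neighbourhood V ⊆ U of a and smooth maps ν₁, …, ν_{m−n} : V → ℝ^m such that for every t ∈ V the system ν₁(t), …, ν_{m−n}(t) is orthonormal (⟪νᵢ(t), νⱼ(t)⟫ = δᵢⱼ) and each νᵢ(t) is orthogonal to the range of fderiv ℝ f t, i.e. ⟪νᵢ(t), fderiv ℝ f t (u)⟫ = 0 for all u ∈ ℝⁿ. -/

import Mathlib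

noncomputable section

open Set
open scoped RealInnerProductSpace
open InnerProductSpace

instance (priority := 2000) (N : ℕ) : WellFoundedLT (Fin N) := inferInstance

lemma aux_linIndep_iff_det (m : ℕ) (v : Fin m → EuclideanSpace ℝ (Fin m)) :
    LinearIndependent ℝ v ↔ (Matrix.of fun i j => v j i).det ≠ 0 := by
  set e := (EuclideanSpace.basisFun (Fin m) ℝ).toBasis with he
  have hdet : e.det v = (Matrix.of fun i j => v j i).det := by
    rw [Module.Basis.det_apply]
    congr 1
  constructor
  · intro h
    have hsp : Submodule.span ℝ (Set.range v) = ⊤ :=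
      h.span_eq_top_of_card_eq_finrank' (by simp [finrank_euclideanSpace_fin])
    have := (Module.Basis.is_basis_iff_det e).mp ⟨h, hsp⟩
    rw [hdet] at this
    exact this.ne_zero
  · intro h
    exact ((Module.Basis.is_basis_iff_det e).mpr (by rw [hdet]; exact isUnit_iff_ne_zero.mpr h)).1

lemma aux_contDiffOn_gramSchmidt {F E : Type*} [NormedAddCommGroup F] [NormedSpace ℝ F]
    [NormedAddCommGroup E] [InnerProductSpace ℝ E]
    {N : ℕ} {V : Set F} {g : Fin N → F → E}
    (hg : ∀ i, ContDiffOn ℝ (⊤ : ℕ∞) (g i) V)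
    (hli : ∀ t ∈ V, LinearIndependent ℝ (fun i => g i t)) :
    ∀ i, ContDiffOn ℝ (⊤ : ℕ∞) (fun t => gramSchmidt ℝ (fun j => g j t) i) V := by
  suffices H : ∀ p : ℕ, ∀ i : Fin N, (i : ℕ) = p →
      ContDiffOn ℝ (⊤ : ℕ∞) (fun t => gramSchmidt ℝ (fun j => g j t) i) V by
    exact fun i => H i i rfl
  intro p
  induction p using Nat.strong_induction_on with
  | _ p IH =>
  intro i hip
  have hform : ∀ t, gramSchmidt ℝ (fun j => g j t) i
      = g i t - ∑ j ∈ Finset.Iio i, (⟪gramSchmidt ℝ (fun j => g j t) j, g i t⟫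
          / ⟪gramSchmidt ℝ (fun j => g j t) j, gramSchmidt ℝ (fun j => g j t) j⟫)
          • gramSchmidt ℝ (fun j => g j t) j := by
    intro t
    have h0 := gramSchmidt_def'' ℝ (fun j => g j t) i
    rw [eq_sub_iff_add_eq]
    conv_rhs => rw [h0]
    congr 1
    refine Finset.sum_congr rfl fun j hj => ?_
    rw [real_inner_self_eq_norm_sq]
    norm_num
  have : ContDiffOn ℝ (⊤ : ℕ∞) (fun t => g i t - ∑ j ∈ Finset.Iio i,
      (⟪gramSchmidt ℝ (fun j => g j t) j, g i t⟫
        / ⟪gramSchmidt ℝ (fun j => g j t) j, gramSchmidt ℝ (fun j => g j t) j⟫)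
        • gramSchmidt ℝ (fun j => g j t) j) V := by
    refine (hg i).sub ?_
    refine ContDiffOn.sum fun j hj => ?_
    have hj' : (j : Fin N) < i := Finset.mem_Iio.mp hj
    have hGj := IH j (by rw [← hip]; exact hj') j rfl
    have hne : ∀ t ∈ V, ⟪gramSchmidt ℝ (fun j' => g j' t) j, gramSchmidt ℝ (fun j' => g j' t) j⟫ ≠ 0 := by
      intro t ht
      rw [real_inner_self_eq_norm_sq]
      have := gramSchmidt_ne_zero (𝕜 := ℝ) j (hli t ht)
      exact pow_ne_zero _ (norm_ne_zero_iff.mpr this)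
    exact (((hGj.inner ℝ (hg i)).div ((hGj.inner ℝ hGj)) hne)).smul hGj
  exact this.congr fun t ht => hform t

lemma aux_extension (n k m : ℕ) (hk : k ≤ m)
    (V : Set (EuclideanSpace ℝ (Fin n))) (hVo : IsOpen V)
    (a : EuclideanSpace ℝ (Fin n)) (haV : a ∈ V)
    (c : Fin k → EuclideanSpace ℝ (Fin n) → EuclideanSpace ℝ (Fin m))
    (hc : ∀ i, ContDiffOn ℝ (⊤ : ℕ∞) (c i) V)
    (hli : ∀ t ∈ V, LinearIndependent ℝ (fun i => c i t)) :
    ∃ V' : Set (EuclideanSpace ℝ (Fin n)), IsOpen V' ∧ a ∈ V' ∧ V' ⊆ V ∧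
      ∃ e : Fin m → EuclideanSpace ℝ (Fin n) → EuclideanSpace ℝ (Fin m),
        (∀ i, ContDiffOn ℝ (⊤ : ℕ∞) (e i) V') ∧
        (∀ t ∈ V', Orthonormal ℝ (fun i => e i t)) ∧
        (∀ t ∈ V', ∀ i : Fin m, (i : ℕ) < k →
          e i t ∈ Submodule.span ℝ (Set.range fun p => c p t)) ∧
        (∀ t ∈ V', ∀ i : Fin m, k ≤ (i : ℕ) →
          ∀ x ∈ Submodule.span ℝ (Set.range fun p => c p t), ⟪e i t, x⟫ = 0) := by
  classical
  -- complementary constant vectors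
  set B : Submodule ℝ (EuclideanSpace ℝ (Fin m)) :=
    Submodule.span ℝ (Set.range fun i => c i a) with hB
  have hfB : Module.finrank ℝ B = k := by
    rw [hB, finrank_span_eq_card (hli a haV)]
    simp
  have hfBo : Module.finrank ℝ Bᗮ = m - k := by
    have := Submodule.finrank_add_finrank_orthogonal B
    rw [hfB, finrank_euclideanSpace_fin] at this
    omega
  set bK : Module.Basis (Fin (m - k)) ℝ Bᗮ := (Module.finBasis ℝ Bᗮ).reindex (finCongr hfBo) with hbK
  set w : Fin (m - k) → EuclideanSpace ℝ (Fin m) := fun q => (bK q : EuclideanSpace ℝ (Fin m))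
    with hw
  have hw_li : LinearIndependent ℝ w :=
    bK.linearIndependent.map' Bᗮ.subtype (Submodule.ker_subtype _)
  have hw_mem : ∀ q, w q ∈ Bᗮ := fun q => (bK q).2
  -- combined family
  set G : Fin m → EuclideanSpace ℝ (Fin n) → EuclideanSpace ℝ (Fin m) :=
    fun i t => if h : (i : ℕ) < k then c ⟨i, h⟩ t else w ⟨(i : ℕ) - k, by omega⟩ with hG
  have hGsm : ∀ i, ContDiffOn ℝ (⊤ : ℕ∞) (G i) V := by
    intro i
    by_cases h : (i : ℕ) < k
    · simpa [hG, dif_pos h] using hc ⟨i, h⟩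
    · simpa [hG, dif_neg h] using contDiffOn_const
  have hGa : LinearIndependent ℝ (fun i => G i a) := by
    set σ : Fin k ⊕ Fin (m - k) ≃ Fin m :=
      finSumFinEquiv.trans (finCongr (by omega)) with hσ
    have hcomp : (fun i => G i a) ∘ σ = Sum.elim (fun p => c p a) w := by
      funext x
      cases x with
      | inl p =>
        have hval : ((σ (Sum.inl p)) : ℕ) = (p : ℕ) := by simp [hσ]
        simp only [Function.comp_apply, Sum.elim_inl, hG]
        rw [dif_pos (by rw [hval]; exact p.isLt)]
        congr 1
      | inr q =>
        have hval : ((σ (Sum.inr q)) : ℕ) = k + (q : ℕ) := by simp [hσ]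
        simp only [Function.comp_apply, Sum.elim_inr, hG]
        rw [dif_neg (by omega)]
        exact congrArg w (Fin.ext (by simp only [Fin.val_mk]; omega))
    have hdisj : Disjoint (Submodule.span ℝ (Set.range fun p => c p a))
        (Submodule.span ℝ (Set.range w)) := by
      refine (Submodule.orthogonal_disjoint B).mono_right ?_
      rw [Submodule.span_le]
      rintro _ ⟨q, rfl⟩
      exact hw_mem q
    have := (hli a haV).sum_type hw_li (by rw [← hB] at hdisj ⊢; exact hdisj)
    rw [← hcomp] at this
    exact (linearIndependent_equiv σ).mp this
  -- the open set where G stays independent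
  set D : EuclideanSpace ℝ (Fin n) → ℝ :=
    fun t => (Matrix.of fun i j : Fin m => G j t i).det with hD
  have hDcont : ContinuousOn D V := by
    refine continuous_id.matrix_det.comp_continuousOn ?_
    refine continuousOn_pi.2 fun i => continuousOn_pi.2 fun j => ?_
    exact (EuclideanSpace.proj i).continuous.comp_continuousOn (hGsm j).continuousOn
  set V' : Set (EuclideanSpace ℝ (Fin n)) := V ∩ D ⁻¹' ({0}ᶜ) with hV'
  have hV'V : V' ⊆ V := inter_subset_left
  have hV'o : IsOpen V' := hDcont.isOpen_inter_preimage hVo isOpen_compl_singleton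
  have haV' : a ∈ V' := by
    refine ⟨haV, ?_⟩
    have := (aux_linIndep_iff_det m (fun i => G i a)).mp hGa
    simpa [hD] using this
  have hGli : ∀ t ∈ V', LinearIndependent ℝ (fun i => G i t) := by
    intro t ht
    refine (aux_linIndep_iff_det m (fun i => G i t)).mpr ?_
    have := ht.2
    simpa [hD] using this
  -- Gram–Schmidt
  set gs : Fin m → EuclideanSpace ℝ (Fin n) → EuclideanSpace ℝ (Fin m) :=
    fun i t => gramSchmidt ℝ (fun j => G j t) i with hgs
  have hgs_sm : ∀ i, ContDiffOn ℝ (⊤ : ℕ∞) (gs i) V' :=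
    aux_contDiffOn_gramSchmidt (fun i => (hGsm i).mono hV'V) hGli
  have hgs_ne : ∀ t ∈ V', ∀ i, gs i t ≠ 0 := fun t ht i =>
    gramSchmidt_ne_zero (𝕜 := ℝ) i (hGli t ht)
  set e : Fin m → EuclideanSpace ℝ (Fin n) → EuclideanSpace ℝ (Fin m) :=
    fun i t => gramSchmidtNormed ℝ (fun j => G j t) i with he
  have he_eq : ∀ i t, e i t = (‖gs i t‖)⁻¹ • gs i t := by
    intro i t
    simp [he, gramSchmidtNormed, hgs]
  have he_sm : ∀ i, ContDiffOn ℝ (⊤ : ℕ∞) (e i) V' := by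
    intro i
    refine ContDiffOn.congr ?_ fun t ht => he_eq i t
    exact (((hgs_sm i).norm ℝ (fun t ht => hgs_ne t ht i)).inv
      (fun t ht => norm_ne_zero_iff.mpr (hgs_ne t ht i))).smul (hgs_sm i)
  have he_on : ∀ t ∈ V', Orthonormal ℝ (fun i => e i t) := fun t ht =>
    gramSchmidtNormed_orthonormal (hGli t ht)
  -- the span comparison
  have hspan_eq : ∀ t, Submodule.span ℝ (Set.range fun p => c p t)
      = Submodule.span ℝ ((fun j => gs j t) '' {j : Fin m | (j : ℕ) < k}) := by
    intro t
    have himg : (fun j => G j t) '' {j : Fin m | (j : ℕ) < k}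
        = Set.range fun p => c p t := by
      ext y
      constructor
      · rintro ⟨j, hj, rfl⟩
        have hj' : (j : ℕ) < k := hj
        refine ⟨⟨(j : ℕ), hj'⟩, ?_⟩
        simp only [hG]
        rw [dif_pos hj']
      · rintro ⟨p, rfl⟩
        refine ⟨⟨(p : ℕ), lt_of_lt_of_le p.isLt hk⟩, p.isLt, ?_⟩
        simp only [hG]
        rw [dif_pos p.isLt]
    rcases eq_or_lt_of_le hk with hkm | hkm
    · have hS : {j : Fin m | (j : ℕ) < k} = Set.univ := by
        ext j
        simp only [Set.mem_setOf_eq, Set.mem_univ, iff_true]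
        have := j.isLt; omega
      rw [← himg, hS, Set.image_univ, Set.image_univ]
      exact (span_gramSchmidt ℝ (fun j => G j t)).symm
    · have hS : {j : Fin m | (j : ℕ) < k} = Set.Iio (⟨k, hkm⟩ : Fin m) := by
        ext j; simp [Fin.lt_def]
      rw [← himg, hS]
      exact (span_gramSchmidt_Iio ℝ (fun j => G j t) ⟨k, hkm⟩).symm
  refine ⟨V', hV'o, haV', hV'V, e, he_sm, he_on, ?_, ?_⟩
  · -- small indices lie in the span of the `c`s
    intro t ht i hik
    rw [hspan_eq t]
    rw [he_eq]
    refine Submodule.smul_mem _ _ ?_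
    exact Submodule.subset_span ⟨i, hik, rfl⟩
  · -- large indices are orthogonal to the span of the `c`s
    intro t ht i hik x hx
    rw [hspan_eq t] at hx
    have key : Submodule.span ℝ ((fun j => gs j t) '' {j : Fin m | (j : ℕ) < k})
        ≤ (ℝ ∙ (e i t))ᗮ := by
      rw [Submodule.span_le]
      rintro _ ⟨j, hj, rfl⟩
      rw [SetLike.mem_coe, Submodule.mem_orthogonal_singleton_iff_inner_right]
      rw [he_eq, real_inner_smul_left]
      have : ⟪gs i t, gs j t⟫ = 0 :=
        gramSchmidt_orthogonal ℝ (fun j' => G j' t) (by have hj' : (j : ℕ) < k := hj; intro hij; rw [hij] at hik; omega)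
      rw [this, mul_zero]
    exact Submodule.mem_orthogonal_singleton_iff_inner_right.mp (key hx)

/-- A `C^∞` map `f : U → ℝ^m` (with `U ⊆ ℝⁿ` open, `n ≤ m`) is a *frontal* at `a ∈ U` if
on some open neighbourhood `V ⊆ U` of `a` there are smooth maps `h₁, …, h_n : V → ℝ^m`,
linearly independent at every point of `V`, whose pointwise span contains the range of the
derivative of `f`. -/
def IsFrontalAt (n m : ℕ) (U : Set (EuclideanSpace ℝ (Fin n)))
    (f : EuclideanSpace ℝ (Fin n) → EuclideanSpace ℝ (Fin m))
    (a : EuclideanSpace ℝ (Fin n)) : Prop :=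
  ∃ V : Set (EuclideanSpace ℝ (Fin n)), IsOpen V ∧ a ∈ V ∧ V ⊆ U ∧
    ∃ h : Fin n → EuclideanSpace ℝ (Fin n) → EuclideanSpace ℝ (Fin m),
      (∀ i, ContDiffOn ℝ (⊤ : ℕ∞) (h i) V) ∧
      (∀ t ∈ V, LinearIndependent ℝ (fun i => h i t)) ∧
      (∀ t ∈ V, LinearMap.range (fderiv ℝ f t : EuclideanSpace ℝ (Fin n) →ₗ[ℝ] EuclideanSpace ℝ (Fin m)) ≤
        Submodule.span ℝ (Set.range fun i => h i t))

/-- Euclidean characterisation of frontals by orthonormal normal fields.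
`f : U → ℝ^m` (`U ⊆ ℝⁿ` open, `n ≤ m`) is a frontal at `a ∈ U` if and only if there exist an
open neighbourhood `V ⊆ U` of `a` and smooth maps `ν₁, …, ν_{m−n} : V → ℝ^m` such that for
every `t ∈ V` the system `ν₁(t), …, ν_{m−n}(t)` is orthonormal and each `νᵢ(t)` is
orthogonal to the range of `fderiv ℝ f t`.  (Euclidean case of Lemma 7.3 of the paper.) -/
theorem isFrontalAt_iff_exists_orthonormal_normal_fields
    (n m : ℕ) (hnm : n ≤ m)
    (U : Set (EuclideanSpace ℝ (Fin n))) (hU : IsOpen U)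
    (f : EuclideanSpace ℝ (Fin n) → EuclideanSpace ℝ (Fin m))
    (hf : ContDiffOn ℝ (⊤ : ℕ∞) f U)
    (a : EuclideanSpace ℝ (Fin n)) (ha : a ∈ U) :
    IsFrontalAt n m U f a ↔
      ∃ V : Set (EuclideanSpace ℝ (Fin n)), IsOpen V ∧ a ∈ V ∧ V ⊆ U ∧
        ∃ ν : Fin (m - n) → EuclideanSpace ℝ (Fin n) → EuclideanSpace ℝ (Fin m),
          (∀ i, ContDiffOn ℝ (⊤ : ℕ∞) (ν i) V) ∧
          (∀ t ∈ V, Orthonormal ℝ (fun i => ν i t)) ∧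
          (∀ t ∈ V, ∀ i, ∀ u : EuclideanSpace ℝ (Fin n),
            ⟪ν i t, fderiv ℝ f t u⟫ = 0) := by
  constructor
  · rintro ⟨V, hVo, haV, hVU, h, hsm, hli, hsp⟩
    obtain ⟨V', hV'o, haV', hV'V, e, hesm, heon, hesp, heperp⟩ :=
      aux_extension n n m hnm V hVo a haV h hsm hli
    set emb : Fin (m - n) → Fin m := fun j => ⟨n + (j : ℕ), by have := j.isLt; omega⟩ with hemb
    refine ⟨V', hV'o, haV', hV'V.trans hVU, fun j => e (emb j), fun j => hesm _, ?_, ?_⟩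
    · intro t ht
      exact (heon t ht).comp emb fun j₁ j₂ hje => Fin.ext (by
        have := congrArg Fin.val hje; simp [hemb] at this; omega)
    · intro t ht j u
      refine heperp t ht (emb j) (by simp [hemb]) _ ?_
      exact hsp t (hV'V ht) (LinearMap.mem_range_self _ u)
  · rintro ⟨V, hVo, haV, hVU, ν, hsm, hon, hperp⟩
    have hli : ∀ t ∈ V, LinearIndependent ℝ (fun i => ν i t) := fun t ht =>
      (hon t ht).linearIndependent
    obtain ⟨V', hV'o, haV', hV'V, e, hesm, heon, hesp, heperp⟩ :=
      aux_extension n (m - n) m (by omega) V hVo a haV ν hsm hli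
    set emb : Fin n → Fin m := fun j => ⟨(m - n) + (j : ℕ), by have := j.isLt; omega⟩ with hemb
    set emb' : Fin (m - n) → Fin m := fun p => ⟨(p : ℕ), by have := p.isLt; omega⟩ with hemb'
    refine ⟨V', hV'o, haV', hV'V.trans hVU, fun j => e (emb j), fun j => hesm _, ?_, ?_⟩
    · intro t ht
      exact ((heon t ht).comp emb fun j₁ j₂ hje => Fin.ext (by
        have := congrArg Fin.val hje; simp [hemb] at this; omega)).linearIndependent
    · intro t ht
      rintro x ⟨u, rfl⟩
      set x := fderiv ℝ f t u with hx
      set A : Submodule ℝ (EuclideanSpace ℝ (Fin m)) :=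
        Submodule.span ℝ (Set.range fun p => ν p t) with hA
      have hxA : x ∈ Aᗮ := by
        rw [Submodule.mem_orthogonal]
        intro y hy
        induction hy using Submodule.span_induction with
        | mem y hy => obtain ⟨p, rfl⟩ := hy; exact hperp t (hV'V ht) p u
        | zero => simp
        | add y z _ _ hy hz => rw [inner_add_left, hy, hz, add_zero]
        | smul r y _ hy => rw [real_inner_smul_left, hy, mul_zero]
      have htop : Submodule.span ℝ (Set.range fun i => e i t) = ⊤ :=
        (heon t ht).linearIndependent.span_eq_top_of_card_eq_finrank'
          (by simp [finrank_euclideanSpace_fin])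
      have hsplit : Set.range (fun i => e i t) ⊆
          (Set.range fun p : Fin (m - n) => e (emb' p) t) ∪
          (Set.range fun j : Fin n => e (emb j) t) := by
        rintro _ ⟨i, rfl⟩
        by_cases hi : (i : ℕ) < m - n
        · exact Or.inl ⟨⟨(i : ℕ), hi⟩, by congr 1⟩
        · have hii : emb ⟨(i : ℕ) - (m - n), by have := i.isLt; omega⟩ = i := by
            apply Fin.ext
            show (m - n) + ((i : ℕ) - (m - n)) = (i : ℕ)
            omega
          exact Or.inr ⟨_, congrArg (fun q => e q t) hii⟩
      have hxmem : x ∈ (Submodule.span ℝ (Set.range fun p : Fin (m - n) => e (emb' p) t)) ⊔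
          (Submodule.span ℝ (Set.range fun j : Fin n => e (emb j) t)) := by
        rw [← Submodule.span_union]
        refine Submodule.span_mono hsplit ?_
        rw [htop]; trivial
      obtain ⟨y, hy, z, hz, hxyz⟩ := Submodule.mem_sup.mp hxmem
      have hyA : y ∈ A := by
        refine Submodule.span_le.mpr ?_ hy
        rintro _ ⟨p, rfl⟩
        exact hesp t ht (emb' p) (by simp [hemb'])
      have hzAperp : z ∈ Aᗮ := by
        refine Submodule.span_le.mpr ?_ hz
        rintro _ ⟨j, rfl⟩
        rw [SetLike.mem_coe, Submodule.mem_orthogonal]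
        intro w hw
        rw [real_inner_comm]
        exact heperp t ht (emb j) (by simp [hemb]) w hw
      have hy0 : y = 0 := by
        have : y ∈ A ⊓ Aᗮ := ⟨hyA, by
          have : y = x - z := by rw [← hxyz]; abel
          rw [this]; exact Submodule.sub_mem _ hxA hzAperp⟩
        rw [(Submodule.orthogonal_disjoint A).eq_bot] at this
        simpa using this
      change x ∈ _
      rw [← hxyz, hy0, zero_add]
      exact hz
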